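/- For any free matrices V ∈ ℝⁿˣⁿ, U ∈ ℝⁿˣᵈ, W_o ∈ ℝᵖˣⁿ, skew-symmetric S ∈ ℝⁿˣⁿ, positive diagonal Ψ ∈ ℝⁿˣⁿ, and scalars γ > 0, ε > 0, the matrix W = I - Ψ((1/(2γ))W_oᵀW_o + (1/(2γ))Ψ⁻¹UUᵀΨ⁻¹ + VᵀV + εI + S) satisfies 2Λ - ΛW - WᵀΛ - (1/γ)W_oᵀW_o - (1/γ)ΛUUᵀΛ ≻ 0 with Λ = Ψ⁻¹. -/
import Mathlib


open Matrix

/-- Direct parameterization of the Lipschitz LMI: for any free `V`, `U`, `W_o`,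
skew-symmetric `S`, positive diagonal `Ψ`, `γ > 0`, `ε > 0`, the matrix
`W = I - Ψ((1/(2γ))W_oᵀW_o + (1/(2γ))Ψ⁻¹UUᵀΨ⁻¹ + VᵀV + εI + S)` satisfies the
Lipschitz LMI with `Λ = Ψ⁻¹`. -/
theorem direct_parameterization_lipschitz
    {n dI p : ℕ}
    (V : Matrix (Fin n) (Fin n) ℝ) (U : Matrix (Fin n) (Fin dI) ℝ)
    (Wo : Matrix (Fin p) (Fin n) ℝ) (S : Matrix (Fin n) (Fin n) ℝ)
    (hS : S = -Sᵀ)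
    (ψ : Fin n → ℝ) (hψ : ∀ i, 0 < ψ i)
    (Ψ : Matrix (Fin n) (Fin n) ℝ) (hΨ : Ψ = Matrix.diagonal ψ)
    (Λ : Matrix (Fin n) (Fin n) ℝ) (hΛ : Λ = Matrix.diagonal fun i => (ψ i)⁻¹)
    (γ ε : ℝ) (hγ : 0 < γ) (hε : 0 < ε)
    (W : Matrix (Fin n) (Fin n) ℝ)
    (hW : W = 1 - Ψ * ((1 / (2 * γ)) • (Woᵀ * Wo) +
        (1 / (2 * γ)) • (Λ * U * Uᵀ * Λ) + Vᵀ * V +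
        ε • (1 : Matrix (Fin n) (Fin n) ℝ) + S)) :
    ((2 : ℝ) • Λ - Λ * W - Wᵀ * Λ - (1 / γ) • (Woᵀ * Wo) -
      (1 / γ) • (Λ * U * Uᵀ * Λ)).PosDef := by
  set M : Matrix (Fin n) (Fin n) ℝ := (1 / (2 * γ)) • (Woᵀ * Wo) +
        (1 / (2 * γ)) • (Λ * U * Uᵀ * Λ) + Vᵀ * V +
        ε • (1 : Matrix (Fin n) (Fin n) ℝ) + S with hM
  have hΛΨ : Λ * Ψ = 1 := by
    rw [hΛ, hΨ, diagonal_mul_diagonal]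
    rw [show (fun i => (ψ i)⁻¹ * ψ i) = fun _ => (1 : ℝ) from
      funext fun i => inv_mul_cancel₀ (hψ i).ne', diagonal_one]
  have hΨΛ : Ψ * Λ = 1 := by
    rw [hΛ, hΨ, diagonal_mul_diagonal]
    rw [show (fun i => ψ i * (ψ i)⁻¹) = fun _ => (1 : ℝ) from
      funext fun i => mul_inv_cancel₀ (hψ i).ne', diagonal_one]
  have hΛT : Λᵀ = Λ := by rw [hΛ, diagonal_transpose]
  have hΨT : Ψᵀ = Ψ := by rw [hΨ, diagonal_transpose]
  have hγ' : γ ≠ 0 := hγ.ne'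
  have hST : Sᵀ = -S := by conv_lhs => rw [hS]
                           rw [transpose_neg, transpose_transpose]
  have h1 : Λ * W = Λ - M := by
    rw [hW, mul_sub, mul_one, ← mul_assoc, hΛΨ, one_mul]
  have h2 : Wᵀ * Λ = Λ - Mᵀ := by
    rw [hW, transpose_sub, transpose_one, transpose_mul, hΨT, sub_mul, one_mul,
      mul_assoc, hΨΛ, mul_one]
  have key : ((2 : ℝ) • Λ - Λ * W - Wᵀ * Λ - (1 / γ) • (Woᵀ * Wo) -
      (1 / γ) • (Λ * U * Uᵀ * Λ)) =
      Vᵀ * V + Vᵀ * V + Matrix.diagonal (fun _ : Fin n => 2 * ε) := by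
    have hd : Matrix.diagonal (fun _ : Fin n => 2 * ε) =
        (2 * ε) • (1 : Matrix (Fin n) (Fin n) ℝ) := by
      ext i j
      by_cases h : i = j <;> simp [h, Matrix.one_apply]
    rw [h1, h2, hM, hd]
    simp only [transpose_add, transpose_smul, transpose_mul, transpose_transpose,
      transpose_one, hΛT, hST]
    simp only [Matrix.mul_assoc]
    match_scalars <;> field_simp <;> ring
  rw [key]
  have hVsd : (Vᵀ * V).PosSemidef := by
    simpa using posSemidef_conjTranspose_mul_self V
  exact Matrix.PosDef.posSemidef_add (hVsd.add hVsd)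
    (PosDef.diagonal fun _ => by positivity)
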